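/- Equipartition of energy: let s ≥ 0 and let (α,β) ∈ 𝒰₁ satisfy 𝒢_s(α,β) = g₀(s). Then s² f(β(t))² α'(t)² + β'(t)² = (1 − β(t))²/4 for almost every t ∈ ℝ. -/

import Mathlib

open MeasureTheory Set Filter
open scoped ENNReal

/-- Hypotheses on the functions `f` and `f₁` from Section 6.1 of the paper.
`f : [0,1] → [0,∞]` is real-valued, `C¹` and nondecreasing on `[0,1)` with `f(1) = ∞`,
`f(t) = 0` iff `t = 0`, and `f₁(s) = s·f(1−s)` (with `f₁(0) = ℓ`) is strictly decreasing,
`u ↦ f₁(√u)` is convex, and `f₁(s) = ℓ − ℓ₁ s + o(s)` as `s → 0⁺`. -/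
structure FHyp (ℓ ℓ₁ : ℝ) (f : ℝ → ℝ≥0∞) (f₁ : ℝ → ℝ) : Prop where
  hl : 0 < ℓ
  hl1 : 0 < ℓ₁
  freal : ∀ t ∈ Ico (0:ℝ) 1, f t ≠ ⊤
  fdiff : ∃ d : ℝ → ℝ, ContinuousOn d (Ico 0 1) ∧
    ∀ t ∈ Ico (0:ℝ) 1, HasDerivWithinAt (fun x => (f x).toReal) (d t) (Ico 0 1) t
  fmono : MonotoneOn (fun x => (f x).toReal) (Ico 0 1)
  fzero : ∀ t ∈ Icc (0:ℝ) 1, (f t = 0 ↔ t = 0)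
  ftop : f 1 = ⊤
  hf₁ : ∀ s ∈ Ioc (0:ℝ) 1, f₁ s = s * (f (1 - s)).toReal
  hf₁0 : f₁ 0 = ℓ
  f₁anti : StrictAntiOn f₁ (Icc 0 1)
  convexSqrt : ConvexOn ℝ (Icc 0 1) (fun u => f₁ (Real.sqrt u))
  lim0 : Tendsto (fun s => (f₁ s - ℓ + ℓ₁ * s) / s) (nhdsWithin 0 (Ioi 0)) (nhds 0)

/-- `u` is locally absolutely continuous on `ℝ` with a.e. derivative `u'`. -/
def LocAC (u u' : ℝ → ℝ) : Prop :=
  (∀ a b : ℝ, IntegrableOn u' (Icc a b)) ∧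
  ∀ a t : ℝ, u t = u a + ∫ x in a..t, u' x

/-- Membership of the pair `(α, β)` (with a.e. derivatives `α', β'`) in the class `𝒰₁`
of (6.8): `α' ∈ L¹(ℝ)`, `|∫ α'| = 1`, `0 ≤ β ≤ 1`, and `β(t) → 1` as `|t| → ∞`. -/
def MemU1 (α α' β β' : ℝ → ℝ) : Prop :=
  LocAC α α' ∧ LocAC β β' ∧
  Integrable α' ∧ |∫ t : ℝ, α' t| = 1 ∧
  (∀ t : ℝ, 0 ≤ β t ∧ β t ≤ 1) ∧
  Tendsto β atTop (nhds 1) ∧ Tendsto β atBot (nhds 1)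

/-- The functional `𝒢_s` of (6.7), with values in `[0,∞]` and the convention `∞·0 = 0`. -/
noncomputable def Gfun (f : ℝ → ℝ≥0∞) (s : ℝ) (α' β β' : ℝ → ℝ) : ℝ≥0∞ :=
  ∫⁻ t : ℝ, (ENNReal.ofReal (s ^ 2 * (α' t) ^ 2) * (f (β t)) ^ 2
    + ENNReal.ofReal ((1 - β t) ^ 2 / 4 + (β' t) ^ 2))

/-- The cohesive energy density `g₀` of pristine material, definition (6.6). -/
noncomputable def g0E (f : ℝ → ℝ≥0∞) (s : ℝ) : ℝ≥0∞ :=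
  sInf {x | ∃ α α' β β' : ℝ → ℝ, MemU1 α α' β β' ∧ x = Gfun f s α' β β'}

set_option maxHeartbeats 1000000

noncomputable def affE (c d : ℝ) (hc : c ≠ 0) : ℝ ≃ᵐ ℝ :=
  ((Homeomorph.mulLeft₀ c hc).trans (Homeomorph.addRight d)).toMeasurableEquiv

lemma affE_apply (c d : ℝ) (hc : c ≠ 0) (x : ℝ) : affE c d hc x = c * x + d := rfl

lemma map_affE (c d : ℝ) (hc : c ≠ 0) :
    Measure.map (affE c d hc) volume = ENNReal.ofReal |c⁻¹| • volume := by
  have h1 : (affE c d hc : ℝ → ℝ) = (fun x => x + d) ∘ (fun x => c * x) := rfl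
  rw [h1, ← Measure.map_map (measurable_add_const d) (measurable_const_mul c),
    Real.map_volume_mul_left hc, Measure.map_smul, map_add_right_eq_self volume d]

section psi
variable (a lam : ℝ) (hlam : 0 < lam)

noncomputable def psiE : ℝ ≃ᵐ ℝ := affE lam⁻¹ (a - a / lam) (inv_ne_zero hlam.ne')

lemma psiE_apply (x : ℝ) : psiE a lam hlam x = lam⁻¹ * x + (a - a / lam) := rfl

lemma psiE_strictMono : StrictMono (psiE a lam hlam) := by
  intro x y hxy
  simp only [psiE_apply]
  have h0 : 0 < lam⁻¹ := by positivity
  nlinarith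

lemma psiE_fixed : psiE a lam hlam a = a := by
  simp only [psiE_apply]
  field_simp
  ring

lemma psiE_preimage_Ioi : (psiE a lam hlam) ⁻¹' (Ioi a) = Ioi a := by
  ext x
  simp only [mem_preimage, mem_Ioi]
  nth_rewrite 1 [← psiE_fixed a lam hlam]
  exact (psiE_strictMono a lam hlam).lt_iff_lt

lemma psiE_preimage_Icc (c d : ℝ) :
    (psiE a lam hlam) ⁻¹' (Icc (psiE a lam hlam c) (psiE a lam hlam d)) = Icc c d := by
  ext x
  simp only [mem_preimage, mem_Icc, (psiE_strictMono a lam hlam).le_iff_le]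

lemma map_psiE : Measure.map (psiE a lam hlam) volume = ENNReal.ofReal lam • volume := by
  have : |(lam⁻¹)⁻¹| = lam := by rw [inv_inv, abs_of_pos hlam]
  rw [psiE, map_affE, this]

lemma map_psiE_restrict :
    Measure.map (psiE a lam hlam) (volume.restrict (Ioi a))
      = ENNReal.ofReal lam • volume.restrict (Ioi a) := by
  have h := Measure.restrict_map (μ := volume) (psiE a lam hlam).measurable
    (measurableSet_Ioi (a := a))
  rw [psiE_preimage_Ioi] at h
  rw [← h, map_psiE, Measure.restrict_smul]

lemma map_psiE_restrict_Icc (c d : ℝ) :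
    Measure.map (psiE a lam hlam) (volume.restrict (Icc c d))
      = ENNReal.ofReal lam • volume.restrict (Icc (psiE a lam hlam c) (psiE a lam hlam d)) := by
  have h := Measure.restrict_map (μ := volume) (psiE a lam hlam).measurable
    (measurableSet_Icc (a := psiE a lam hlam c) (b := psiE a lam hlam d))
  rw [psiE_preimage_Icc] at h
  rw [← h, map_psiE, Measure.restrict_smul]

lemma lintegral_psiE (h : ℝ → ℝ≥0∞) :
    ∫⁻ t in Ioi a, h (psiE a lam hlam t) = ENNReal.ofReal lam * ∫⁻ t in Ioi a, h t := by
  rw [← MeasureTheory.lintegral_map_equiv h (psiE a lam hlam), map_psiE_restrict,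
    lintegral_smul_measure, smul_eq_mul]

lemma integral_psiE (h : ℝ → ℝ) :
    ∫ t in Ioi a, h (psiE a lam hlam t) = lam * ∫ t in Ioi a, h t := by
  rw [← MeasureTheory.integral_map_equiv (psiE a lam hlam) h, map_psiE_restrict,
    integral_smul_measure, ENNReal.toReal_ofReal hlam.le, smul_eq_mul]

lemma integrableOn_psiE_Ioi (h : ℝ → ℝ) (hh : IntegrableOn h (Ioi a)) :
    IntegrableOn (fun t => h (psiE a lam hlam t)) (Ioi a) := by
  have := MeasureTheory.integrable_map_equiv (μ := volume.restrict (Ioi a)) (psiE a lam hlam) h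
  rw [map_psiE_restrict] at this
  exact this.mp ((integrable_smul_measure (by simp [hlam]) (by simp)).mpr hh)

lemma integrableOn_psiE_Icc (h : ℝ → ℝ) (hh : ∀ c d, IntegrableOn h (Icc c d)) (c d : ℝ) :
    IntegrableOn (fun t => h (psiE a lam hlam t)) (Icc c d) := by
  have := MeasureTheory.integrable_map_equiv (μ := volume.restrict (Icc c d)) (psiE a lam hlam) h
  rw [map_psiE_restrict_Icc] at this
  exact this.mp ((integrable_smul_measure (by simp [hlam]) (by simp)).mpr (hh _ _))

lemma intervalIntegral_psiE (h : ℝ → ℝ) (c t : ℝ) :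
    ∫ x in c..t, h (psiE a lam hlam x)
      = lam * ∫ x in psiE a lam hlam c..psiE a lam hlam t, h x := by
  have := intervalIntegral.integral_comp_mul_add (a := c) (b := t) (f := h)
    (c := lam⁻¹) (inv_ne_zero hlam.ne') (a - a / lam)
  simp only [psiE_apply, this, inv_inv, smul_eq_mul]

end psi


section rescale
variable (a lam : ℝ) (hlam : 0 < lam)

noncomputable def Psi : ℝ → ℝ := fun t => if t ≤ a then t else psiE a lam hlam t

noncomputable def Dv (h : ℝ → ℝ) : ℝ → ℝ :=
  fun t => if t ≤ a then h t else h (psiE a lam hlam t) / lam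

lemma volume_eq_restrict_add :
    (volume : Measure ℝ) = volume.restrict (Iic a) + volume.restrict (Ioi a) := by
  rw [show Ioi a = (Iic a)ᶜ by simp]
  exact (Measure.restrict_add_restrict_compl measurableSet_Iic).symm

lemma Dv_integrableOn (u' : ℝ → ℝ) (h : ∀ c d : ℝ, IntegrableOn u' (Icc c d)) (c d : ℝ) :
    IntegrableOn (Dv a lam hlam u') (Icc c d) := by
  have h1 : IntegrableOn (Dv a lam hlam u') (Icc c d ∩ Iic a) := by
    refine IntegrableOn.congr_fun ((h c d).mono_set inter_subset_left) ?_
      (measurableSet_Icc.inter measurableSet_Iic)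
    intro x hx
    simp [Dv, hx.2.out]
  have h2 : IntegrableOn (Dv a lam hlam u') (Icc c d ∩ Ioi a) := by
    refine IntegrableOn.congr_fun
      (((integrableOn_psiE_Icc a lam hlam u' h c d).mono_set
        inter_subset_left).div_const lam) ?_ (measurableSet_Icc.inter measurableSet_Ioi)
    intro x hx
    simp [Dv, not_le.mpr hx.2.out]
  refine (h1.union h2).mono_set ?_
  intro x hx
  by_cases hxa : x ≤ a
  · exact Or.inl ⟨hx, hxa⟩
  · exact Or.inr ⟨hx, not_le.mp hxa⟩

lemma Dv_intervalIntegrable (u' : ℝ → ℝ) (h : ∀ c d : ℝ, IntegrableOn u' (Icc c d)) (c d : ℝ) :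
    IntervalIntegrable (Dv a lam hlam u') volume c d :=
  (Dv_integrableOn a lam hlam u' h (min c d) (max c d)).intervalIntegrable

lemma Psi_eq_psiE {t : ℝ} (ht : a ≤ t) : Psi a lam hlam t = psiE a lam hlam t := by
  unfold Psi
  split_ifs with h
  · have : t = a := le_antisymm h ht
    subst this
    rw [psiE_fixed]
  · rfl

lemma locAC_rescale (u u' : ℝ → ℝ) (hu : LocAC u u') :
    LocAC (fun t => u (Psi a lam hlam t)) (Dv a lam hlam u') := by
  obtain ⟨hInt, hFTC⟩ := hu
  have key : ∀ t : ℝ, u (Psi a lam hlam t) = u a + ∫ x in a..t, Dv a lam hlam u' x := by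
    intro t
    rcases le_total t a with ht | ht
    · have hPsi : Psi a lam hlam t = t := if_pos ht
      rw [hPsi]
      have : ∫ x in a..t, Dv a lam hlam u' x = ∫ x in a..t, u' x := by
        refine intervalIntegral.integral_congr ?_
        intro x hx
        have : x ≤ a := le_trans hx.2 (by simp [ht])
        simp [Dv, this]
      rw [this, ← hFTC a t]
    · rw [Psi_eq_psiE a lam hlam ht]
      have e1 : ∫ x in a..t, Dv a lam hlam u' x
          = ∫ x in a..t, u' (psiE a lam hlam x) / lam := by
        refine intervalIntegral.integral_congr_ae ?_
        filter_upwards with x hx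
        rw [uIoc_of_le ht] at hx
        simp [Dv, not_le.mpr hx.1]
      have e2 : ∫ x in a..t, u' (psiE a lam hlam x) / lam
          = (∫ x in a..t, u' (psiE a lam hlam x)) / lam := intervalIntegral.integral_div _ _
      rw [e1, e2, intervalIntegral_psiE a lam hlam u' a t, psiE_fixed,
        hFTC a (psiE a lam hlam t)]
      field_simp
  refine ⟨Dv_integrableOn a lam hlam u' hInt, fun c t => ?_⟩
  show u (Psi a lam hlam t) = u (Psi a lam hlam c) + _
  have h1 := key t
  have h2 := key c
  have h3 : (∫ x in c..a, Dv a lam hlam u' x) + ∫ x in a..t, Dv a lam hlam u' x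
      = ∫ x in c..t, Dv a lam hlam u' x :=
    intervalIntegral.integral_add_adjacent_intervals
      (Dv_intervalIntegrable a lam hlam u' hInt c a)
      (Dv_intervalIntegrable a lam hlam u' hInt a t)
  have h4 : (∫ x in c..a, Dv a lam hlam u' x) = - ∫ x in a..c, Dv a lam hlam u' x :=
    intervalIntegral.integral_symm a c
  rw [h1, h2]
  linarith

lemma memU1_rescale (α α' β β' : ℝ → ℝ) (hU : MemU1 α α' β β') :
    MemU1 (fun t => α (Psi a lam hlam t)) (Dv a lam hlam α')
      (fun t => β (Psi a lam hlam t)) (Dv a lam hlam β') := by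
  obtain ⟨hα, hβ, hInt, hNorm, hBd, hTop, hBot⟩ := hU
  have hIic : IntegrableOn (Dv a lam hlam α') (Iic a) := by
    refine IntegrableOn.congr_fun hInt.integrableOn ?_ measurableSet_Iic
    intro x hx; simp [Dv, hx.out]
  have hIoi : IntegrableOn (Dv a lam hlam α') (Ioi a) := by
    refine IntegrableOn.congr_fun
      ((integrableOn_psiE_Ioi a lam hlam α' hInt.integrableOn).div_const lam) ?_
      measurableSet_Ioi
    intro x hx; simp [Dv, not_le.mpr hx.out]
  have hDInt : Integrable (Dv a lam hlam α') := by
    rw [volume_eq_restrict_add a]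
    exact Integrable.add_measure hIic hIoi
  refine ⟨locAC_rescale a lam hlam α α' hα, locAC_rescale a lam hlam β β' hβ, hDInt, ?_,
    fun t => hBd _, ?_, ?_⟩
  · have e0 : ∫ t : ℝ, Dv a lam hlam α' t
        = (∫ t in Iic a, Dv a lam hlam α' t) + ∫ t in Ioi a, Dv a lam hlam α' t := by
      nth_rewrite 1 [volume_eq_restrict_add a]
      exact integral_add_measure hIic hIoi
    have e1 : ∫ t in Iic a, Dv a lam hlam α' t = ∫ t in Iic a, α' t := by
      refine setIntegral_congr_fun measurableSet_Iic ?_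
      intro x hx; simp [Dv, hx.out]
    have e2 : ∫ t in Ioi a, Dv a lam hlam α' t = ∫ t in Ioi a, α' t := by
      have : ∫ t in Ioi a, Dv a lam hlam α' t
          = ∫ t in Ioi a, α' (psiE a lam hlam t) / lam := by
        refine setIntegral_congr_fun measurableSet_Ioi ?_
        intro x hx; simp [Dv, not_le.mpr hx.out]
      rw [this, integral_div, integral_psiE a lam hlam α', mul_comm,
        mul_div_assoc, div_self hlam.ne', mul_one]
    have e3 : ∫ t : ℝ, α' t = (∫ t in Iic a, α' t) + ∫ t in Ioi a, α' t := by
      nth_rewrite 1 [volume_eq_restrict_add a]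
      exact integral_add_measure hInt.integrableOn hInt.integrableOn
    rw [e0, e1, e2, ← e3, hNorm]
  · have hpsi : Tendsto (psiE a lam hlam) atTop atTop := by
      have : Tendsto (fun t : ℝ => lam⁻¹ * t) atTop atTop :=
        Tendsto.const_mul_atTop (by positivity) tendsto_id
      exact (tendsto_atTop_add_const_right atTop (a - a / lam) this).congr
        fun x => (psiE_apply a lam hlam x).symm
    refine (hTop.comp hpsi).congr' ?_
    filter_upwards [eventually_gt_atTop a] with t ht
    simp [Function.comp, Psi_eq_psiE a lam hlam ht.le]
  · refine hBot.congr' ?_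
    filter_upwards [eventually_lt_atBot a] with t ht
    simp [Psi, ht.le]
end rescale

lemma LocAC_continuous (u u' : ℝ → ℝ) (hu : LocAC u u') : Continuous u := by
  have hii : ∀ c d : ℝ, IntervalIntegrable u' volume c d := fun c d =>
    (hu.1 (min c d) (max c d)).intervalIntegrable
  have hc := intervalIntegral.continuous_primitive hii 0
  have : u = fun t => u 0 + ∫ x in (0:ℝ)..t, u' x := funext fun t => hu.2 0 t
  rw [this]
  exact continuous_const.add hc

lemma measurable_f_comp (f : ℝ → ℝ≥0∞) (β : ℝ → ℝ)
    (hg : ContinuousOn (fun x => (f x).toReal) (Ico 0 1))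
    (hfin : ∀ t ∈ Ico (0:ℝ) 1, f t ≠ ⊤) (hft : f 1 = ⊤)
    (hβc : Continuous β) (hβb : ∀ t, 0 ≤ β t ∧ β t ≤ 1) :
    Measurable (fun t => f (β t)) := by
  set g : ℝ → ℝ := fun x => (f x).toReal with hgdef
  have hcn : ∀ n : ℕ, (0:ℝ) < 1 / (n + 2) := by
    intro n; positivity
  have hcn' : ∀ n : ℕ, (1:ℝ) - 1 / (n + 2) < 1 := fun n => by linarith [hcn n]
  have hcn'' : ∀ n : ℕ, (0:ℝ) ≤ 1 - 1 / (n + 2) := by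
    intro n
    have h3 : (0:ℝ) < (n:ℝ) + 2 := by positivity
    have : (1:ℝ) / (n + 2) ≤ 1 := by
      rw [div_le_one h3]; linarith [Nat.cast_nonneg (α := ℝ) n]
    linarith
  set gn : ℕ → ℝ → ℝ := fun n x => g (max 0 (min x (1 - 1 / (n + 2)))) with hgn
  have hgnc : ∀ n, Continuous (gn n) := by
    intro n
    have hmaps : ∀ x : ℝ, max 0 (min x (1 - 1 / ((n:ℝ) + 2))) ∈ Ico (0:ℝ) 1 := by
      intro x
      exact ⟨le_max_left _ _,
        lt_of_le_of_lt (max_le (hcn'' n) (min_le_right _ _)) (hcn' n)⟩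
    have := ContinuousOn.comp_continuous (g := g)
      (f := fun x : ℝ => max 0 (min x (1 - 1 / ((n:ℝ) + 2)))) (s := Ico 0 1) hg
      (continuous_const.max (continuous_id.min continuous_const)) hmaps
    exact this
  set Fn : ℕ → ℝ → ℝ≥0∞ := fun n t =>
    if β t ≤ 1 - 1 / (n + 2) then ENNReal.ofReal (gn n (β t)) else ⊤ with hFn
  have hFnm : ∀ n, Measurable (Fn n) := by
    intro n
    refine Measurable.ite ?_ ?_ measurable_const
    · exact measurableSet_le hβc.measurable measurable_const
    · exact ENNReal.measurable_ofReal.comp ((hgnc n).measurable.comp hβc.measurable)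
  have key : (fun t => f (β t)) = fun t => ⨅ n, Fn n t := by
    funext t
    rcases lt_or_eq_of_le (hβb t).2 with hlt | heq
    · have hne : f (β t) ≠ ⊤ := hfin (β t) ⟨(hβb t).1, hlt⟩
      have hval : ∀ n : ℕ, β t ≤ 1 - 1 / (n + 2) → Fn n t = f (β t) := by
        intro n hn
        have : max 0 (min (β t) (1 - 1 / ((n:ℝ) + 2))) = β t := by
          rw [min_eq_left hn, max_eq_right (hβb t).1]
        simp only [hFn, if_pos hn, hgn, this, hgdef]
        exact ENNReal.ofReal_toReal hne
      obtain ⟨n₀, hn₀⟩ : ∃ n : ℕ, β t ≤ 1 - 1 / (n + 2) := by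
        obtain ⟨n, hn⟩ := exists_nat_ge (1 / (1 - β t))
        refine ⟨n, ?_⟩
        have h1 : (0:ℝ) < 1 - β t := by linarith
        rw [div_le_iff₀ h1] at hn
        have h3 : (0:ℝ) < (n:ℝ) + 2 := by positivity
        have h4 : 1 / ((n:ℝ) + 2) ≤ 1 - β t := by
          rw [div_le_iff₀ h3]; nlinarith
        linarith
      refine le_antisymm (le_iInf fun n => ?_) ?_
      · by_cases hn : β t ≤ 1 - 1 / ((n:ℝ) + 2)
        · exact (hval n hn).ge
        · simp only [hFn, if_neg hn]
          exact le_top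
      · exact iInf_le_of_le n₀ (hval n₀ hn₀).le
    · have hnot : ∀ n : ℕ, ¬ (β t ≤ 1 - 1 / ((n:ℝ) + 2)) := by
        intro n
        push_neg
        rw [heq]
        exact hcn' n
      have hT : ∀ n : ℕ, Fn n t = ⊤ := by
        intro n
        simp only [hFn]
        rw [if_neg (hnot n)]
      rw [heq, hft]
      simp [hT]
  rw [key]
  exact Measurable.iInf hFnm


section finite
variable {ℓ ℓ₁ : ℝ} {f : ℝ → ℝ≥0∞} {f₁ : ℝ → ℝ}

lemma exp_neg_sq_le_one (t : ℝ) : Real.exp (-(t^2)) ≤ 1 := by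
  rw [show (1:ℝ) = Real.exp 0 by simp]
  exact Real.exp_le_exp.mpr (neg_nonpos.mpr (sq_nonneg t))

lemma betac_mem (t : ℝ) : (0:ℝ) ≤ 1 - Real.exp (-(t^2)) / 2 ∧ 1 - Real.exp (-(t^2)) / 2 ≤ 1 := by
  have h1 := Real.exp_pos (-(t^2))
  have h2 := exp_neg_sq_le_one t
  constructor <;> linarith

lemma g0E_lt_top (hf : FHyp ℓ ℓ₁ f f₁) (s : ℝ) : g0E f s < ⊤ := by
  classical
  set αc' : ℝ → ℝ := Set.indicator (Icc (0:ℝ) 1) (fun _ => (1:ℝ)) with hαc'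
  set αc : ℝ → ℝ := fun t => ∫ x in (0:ℝ)..t, αc' x with hαc
  set βc : ℝ → ℝ := fun t => 1 - Real.exp (-(t^2)) / 2 with hβc
  set βc' : ℝ → ℝ := fun t => t * Real.exp (-(t^2)) with hβc'
  have hαint : Integrable αc' := by
    rw [hαc', integrable_indicator_iff measurableSet_Icc]
    exact integrableOn_const (by simp [Real.volume_Icc])
  have hβcont : Continuous βc := by
    rw [hβc]; continuity
  have hβ'cont : Continuous βc' := by
    rw [hβc']; continuity
  have hderiv : ∀ x : ℝ, HasDerivAt βc (βc' x) x := by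
    intro x
    have h1 : HasDerivAt (fun t : ℝ => -(t^2)) (-(2*x)) x := by
      exact (hasDerivAt_pow 2 x).neg.congr_deriv (by norm_num)
    have h2 := (h1.exp.div_const 2).const_sub 1
    exact h2.congr_deriv (by simp only [hβc']; ring)
  have hMem : MemU1 αc αc' βc βc' := by
    refine ⟨⟨fun c d => hαint.integrableOn, fun c t => ?_⟩,
      ⟨fun c d => hβ'cont.integrableOn_Icc, fun c t => ?_⟩, hαint, ?_, betac_mem, ?_, ?_⟩
    · rw [hαc]
      have := intervalIntegral.integral_add_adjacent_intervals
        (hαint.intervalIntegrable (a := 0) (b := c)) (hαint.intervalIntegrable (a := c) (b := t))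
      simp only [← this]
    · have := intervalIntegral.integral_eq_sub_of_hasDerivAt
        (f := βc) (f' := βc') (a := c) (b := t) (fun x _ => hderiv x)
        (hβ'cont.intervalIntegrable c t)
      rw [this]
      ring
    · rw [hαc', MeasureTheory.integral_indicator measurableSet_Icc]
      simp [Real.volume_Icc]
    · have hE : Tendsto (fun t : ℝ => Real.exp (-(t^2))) atTop (nhds 0) := by
        refine Real.tendsto_exp_atBot.comp ?_
        exact tendsto_neg_atTop_atBot.comp (tendsto_pow_atTop (n := 2) (by norm_num))
      rw [hβc]
      simpa using tendsto_const_nhds.sub (hE.div_const 2)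
    · have hE : Tendsto (fun t : ℝ => Real.exp (-(t^2))) atBot (nhds 0) := by
        refine Real.tendsto_exp_atBot.comp ?_
        refine tendsto_neg_atTop_atBot.comp ?_
        have h2 := (tendsto_pow_atTop (n := 2) (by norm_num)).comp
          (tendsto_neg_atBot_atTop : Tendsto (fun x : ℝ => -x) atBot atTop)
        exact h2.congr fun x => by simp [Function.comp, neg_sq]
      rw [hβc]
      simpa using tendsto_const_nhds.sub (hE.div_const 2)
  -- bound the energy
  obtain ⟨c₀, hc₀⟩ : ∃ c₀ : ℝ, c₀ = 1 - Real.exp (-1) / 2 := ⟨_, rfl⟩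
  have hc₀mem : c₀ ∈ Ico (0:ℝ) 1 := by
    have h1 := Real.exp_pos (-1)
    have h2 : Real.exp (-1) ≤ 1 := by
      rw [show (1:ℝ) = Real.exp 0 by simp]
      exact Real.exp_le_exp.mpr (by norm_num)
    rw [hc₀]
    constructor <;> [linarith; (show (1:ℝ) - Real.exp (-1)/2 < 1; linarith)]
  set K : ℝ≥0∞ := ENNReal.ofReal (s^2) * (ENNReal.ofReal ((f c₀).toReal))^2 with hK
  have hKne : K ≠ ⊤ := by
    rw [hK]
    exact ENNReal.mul_ne_top ENNReal.ofReal_ne_top (by simp [ENNReal.pow_ne_top])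
  set bd1 : ℝ → ℝ≥0∞ := Set.indicator (Icc (0:ℝ) 1) (fun _ => K) with hbd1
  set bd2 : ℝ → ℝ≥0∞ := fun t => ENNReal.ofReal ((1 + 1/16) * Real.exp (-(t^2))) with hbd2
  have hpt : ∀ t : ℝ, ENNReal.ofReal (s ^ 2 * (αc' t) ^ 2) * (f (βc t)) ^ 2
      + ENNReal.ofReal ((1 - βc t) ^ 2 / 4 + (βc' t) ^ 2) ≤ bd1 t + bd2 t := by
    intro t
    refine add_le_add ?_ ?_
    · by_cases ht : t ∈ Icc (0:ℝ) 1
      · have hα1 : αc' t = 1 := by rw [hαc']; simp [Set.indicator_of_mem ht]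
        have hβle : βc t ≤ c₀ := by
          rw [hβc, hc₀]
          have : Real.exp (-1) ≤ Real.exp (-(t^2)) := by
            apply Real.exp_le_exp.mpr
            nlinarith [ht.1, ht.2]
          linarith
        have hβmem : βc t ∈ Ico (0:ℝ) 1 := ⟨(betac_mem t).1, lt_of_le_of_lt hβle hc₀mem.2⟩
        have hfle : f (βc t) ≤ ENNReal.ofReal ((f c₀).toReal) := by
          rw [← ENNReal.ofReal_toReal (hf.freal _ hβmem)]
          exact ENNReal.ofReal_le_ofReal (hf.fmono hβmem hc₀mem hβle)
        rw [hbd1, Set.indicator_of_mem ht, hα1, hK]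
        gcongr
        norm_num
      · have hα0 : αc' t = 0 := by rw [hαc']; simp [Set.indicator_of_notMem ht]
        rw [hα0]
        simp
    · rw [hbd2]
      apply ENNReal.ofReal_le_ofReal
      have hE := Real.exp_pos (-(t^2))
      have h1 : (1 - βc t)^2 / 4 = Real.exp (-(t^2))^2 / 16 := by
        rw [hβc]; ring
      have h2 : Real.exp (-(t^2))^2 ≤ Real.exp (-(t^2)) := by
        nlinarith [exp_neg_sq_le_one t]
      have h3 : (βc' t)^2 ≤ Real.exp (-(t^2)) := by
        have ha : t^2 ≤ Real.exp (t^2) := by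
          have := Real.add_one_le_exp (t^2)
          linarith [sq_nonneg t]
        have hc : Real.exp (t^2) * Real.exp (-(t^2)) = 1 := by
          rw [← Real.exp_add]; simp
        have : (βc' t)^2 = t^2 * Real.exp (-(t^2))^2 := by rw [hβc']; ring
        rw [this]
        calc t^2 * Real.exp (-(t^2))^2
            ≤ Real.exp (t^2) * Real.exp (-(t^2))^2 :=
              mul_le_mul_of_nonneg_right ha (sq_nonneg _)
          _ = (Real.exp (t^2) * Real.exp (-(t^2))) * Real.exp (-(t^2)) := by ring
          _ = Real.exp (-(t^2)) := by rw [hc, one_mul]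
      nlinarith
  have hbd1m : Measurable bd1 := by
    rw [hbd1]
    exact measurable_const.indicator measurableSet_Icc
  have hGle : Gfun f s αc' βc βc' ≤ ∫⁻ t : ℝ, (bd1 t + bd2 t) := lintegral_mono hpt
  have hsum : ∫⁻ t : ℝ, (bd1 t + bd2 t) = (∫⁻ t, bd1 t) + ∫⁻ t, bd2 t :=
    lintegral_add_left hbd1m _
  have hbd1fin : (∫⁻ t, bd1 t) < ⊤ := by
    rw [hbd1, lintegral_indicator measurableSet_Icc, setLIntegral_const]
    exact ENNReal.mul_lt_top hKne.lt_top (by simp [Real.volume_Icc])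
  have hbd2fin : (∫⁻ t, bd2 t) < ⊤ := by
    have hint : Integrable (fun t : ℝ => (1 + 1/16) * Real.exp (-(t^2))) := by
      have := (integrable_exp_neg_mul_sq (b := 1) one_pos).const_mul (1 + 1/16)
      refine this.congr ?_
      filter_upwards with x
      rw [neg_mul, one_mul]
    have h0 : 0 ≤ᵐ[volume] fun t : ℝ => (1 + 1/16) * Real.exp (-(t^2)) := by
      filter_upwards with x
      positivity
    exact (hasFiniteIntegral_iff_ofReal h0).mp hint.hasFiniteIntegral
  have : Gfun f s αc' βc βc' < ⊤ := lt_of_le_of_lt hGle (by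
    rw [hsum]; exact ENNReal.add_lt_top.mpr ⟨hbd1fin, hbd2fin⟩)
  refine lt_of_le_of_lt (sInf_le ?_) this
  exact ⟨αc, αc', βc, βc', hMem, rfl⟩
end finite

lemma pq_eq (p q : ℝ) (hp : 0 ≤ p) (hq : 0 ≤ q)
    (h : ∀ lam : ℝ, 0 < lam → p + q ≤ (1/lam) * p + lam * q) : p = q := by
  rcases eq_or_lt_of_le hq with hq0 | hq0
  · have h2 := h 2 (by norm_num)
    have h3 := h (1/2) (by norm_num)
    rw [← hq0] at h2 ⊢
    norm_num at h2 ⊢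
    linarith
  · rcases eq_or_lt_of_le hp with hp0 | hp0
    · have h3 := h (1/2) (by norm_num)
      rw [← hp0] at h3 ⊢
      norm_num at h3
      linarith
    · set r := Real.sqrt (p/q) with hrdef
      have hr : 0 < r := Real.sqrt_pos.mpr (by positivity)
      have hr2 : r^2 = p/q := Real.sq_sqrt (by positivity)
      have hpq : p = r^2 * q := by rw [hr2]; field_simp
      have e1 : (1/r) * p = r * q := by
        rw [hpq]; field_simp
      have h5 : p + q ≤ 2 * (r * q) := by
        have := h r hr
        rw [e1] at this
        linarith
      have hr1 : (r - 1)^2 ≤ 0 := by nlinarith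
      have hr0 : (r - 1)^2 = 0 := le_antisymm hr1 (sq_nonneg _)
      have : r = 1 := by
        have := pow_eq_zero_iff (n := 2) (by norm_num) |>.mp hr0
        linarith [sub_eq_zero.mp this]
      rw [hpq, this]
      ring

lemma aemeasurable_of_locInt (u' : ℝ → ℝ) (h : ∀ c d : ℝ, IntegrableOn u' (Icc c d)) :
    AEMeasurable u' (volume : Measure ℝ) := by
  have hU : (univ : Set ℝ) = ⋃ n : ℕ, Icc (-(n:ℝ)) n := by
    ext x
    simp only [mem_univ, mem_iUnion, mem_Icc, true_iff]
    obtain ⟨n, hn⟩ := exists_nat_gt |x|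
    exact ⟨n, by cases abs_le.mp hn.le with | intro h1 h2 => exact h1, (abs_le.mp hn.le).2⟩
  have : AEMeasurable u' (volume.restrict (⋃ n : ℕ, Icc (-(n:ℝ)) n)) := by
    rw [aemeasurable_iUnion_iff]
    exact fun n => (h _ _).aemeasurable
  rwa [← hU, Measure.restrict_univ] at this


/-- equipartition of energy: any minimizer `(α, β) ∈ 𝒰₁` of `𝒢_s` satisfies
`s² f(β)² α'² + β'² = (1−β)²/4` almost everywhere (with the convention `∞·0 = 0`). -/
theorem stmt_15 (ℓ ℓ₁ : ℝ) (f : ℝ → ℝ≥0∞) (f₁ : ℝ → ℝ) (hf : FHyp ℓ ℓ₁ f f₁)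
    (s : ℝ) (hs : 0 ≤ s)
    (α α' β β' : ℝ → ℝ) (hU : MemU1 α α' β β')
    (hmin : Gfun f s α' β β' = g0E f s) :
    ∀ᵐ t : ℝ ∂volume,
      ENNReal.ofReal (s ^ 2 * (α' t) ^ 2) * (f (β t)) ^ 2
          + ENNReal.ofReal ((β' t) ^ 2)
        = ENNReal.ofReal ((1 - β t) ^ 2 / 4) := by
  classical
  obtain ⟨hLα, hLβ, hαInt, hNorm, hBd, hTop, hBot⟩ := hU
  have hUfull : MemU1 α α' β β' := ⟨hLα, hLβ, hαInt, hNorm, hBd, hTop, hBot⟩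
  set A : ℝ → ℝ≥0∞ := fun t => ENNReal.ofReal (s ^ 2 * (α' t) ^ 2) * (f (β t)) ^ 2 with hA
  set B : ℝ → ℝ≥0∞ := fun t => ENNReal.ofReal ((1 - β t) ^ 2 / 4) with hB
  set C : ℝ → ℝ≥0∞ := fun t => ENNReal.ofReal ((β' t) ^ 2) with hC
  -- measurability
  have hβcont : Continuous β := LocAC_continuous β β' hLβ
  have hgcont : ContinuousOn (fun x => (f x).toReal) (Ico 0 1) := by
    obtain ⟨d, hdc, hdd⟩ := hf.fdiff
    exact fun t ht => (hdd t ht).continuousWithinAt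
  have hfβ : Measurable (fun t => f (β t)) :=
    measurable_f_comp f β hgcont hf.freal hf.ftop hβcont hBd
  have hα'm : AEMeasurable α' (volume : Measure ℝ) := hαInt.1.aemeasurable
  have hβ'm : AEMeasurable β' (volume : Measure ℝ) := aemeasurable_of_locInt β' hLβ.1
  have hAm : AEMeasurable A (volume : Measure ℝ) := by
    rw [hA]
    exact (ENNReal.measurable_ofReal.comp_aemeasurable
      (((hα'm.pow_const 2).const_mul (s^2)))).mul ((hfβ.pow_const 2).aemeasurable)
  have hBm : Measurable B := by
    rw [hB]
    exact ENNReal.measurable_ofReal.comp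
      ((((continuous_const.sub hβcont).pow 2).div_const 4).measurable)
  have hCm : AEMeasurable C (volume : Measure ℝ) :=
    ENNReal.measurable_ofReal.comp_aemeasurable (hβ'm.pow_const 2)
  have hACm : AEMeasurable (fun t => A t + C t) (volume : Measure ℝ) := hAm.add hCm
  -- pointwise identity for the integrand of Gfun
  have hInteg : ∀ t : ℝ, ENNReal.ofReal (s ^ 2 * (α' t) ^ 2) * (f (β t)) ^ 2
      + ENNReal.ofReal ((1 - β t) ^ 2 / 4 + (β' t) ^ 2) = A t + (B t + C t) := by
    intro t
    rw [hA, hB, hC, ENNReal.ofReal_add (by positivity) (by positivity)]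
  have hsplit : ∀ g : ℝ → ℝ≥0∞, ∀ a : ℝ,
      ∫⁻ t, g t = (∫⁻ t in Iic a, g t) + ∫⁻ t in Ioi a, g t := by
    intro g a
    nth_rewrite 1 [volume_eq_restrict_add a]
    exact lintegral_add_measure g _ _
  have htotal : Gfun f s α' β β' = ∫⁻ t, (A t + (B t + C t)) := by
    rw [Gfun]
    exact lintegral_congr fun t => hInteg t
  have hfinTot : Gfun f s α' β β' < ⊤ := by
    rw [hmin]; exact g0E_lt_top hf s
  -- key identity for every a
  have key : ∀ a : ℝ, (∫⁻ t in Ioi a, (A t + C t)) = ∫⁻ t in Ioi a, B t := by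
    intro a
    set P : ℝ≥0∞ := ∫⁻ t in Ioi a, (A t + C t) with hP
    set Q : ℝ≥0∞ := ∫⁻ t in Ioi a, B t with hQ
    set I₁ : ℝ≥0∞ := ∫⁻ t in Iic a, (A t + (B t + C t)) with hI₁
    have hIoiTot : ∫⁻ t in Ioi a, (A t + (B t + C t)) = P + Q := by
      have e1 : ∫⁻ t in Ioi a, (A t + (B t + C t))
          = ∫⁻ t in Ioi a, ((A t + C t) + B t) := by
        apply lintegral_congr
        intro t
        ring
      rw [e1, lintegral_add_left' (hACm.restrict) B, hP, hQ]
    have hMtotal : Gfun f s α' β β' = I₁ + (P + Q) := by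
      rw [htotal, hsplit (fun t => A t + (B t + C t)) a, hIoiTot, hI₁]
    have hfinI₁ : I₁ ≠ ⊤ := by
      refine ne_top_of_le_ne_top hfinTot.ne ?_
      rw [hMtotal]
      exact le_self_add
    have hfinP : P ≠ ⊤ := by
      refine ne_top_of_le_ne_top hfinTot.ne ?_
      rw [hMtotal]
      calc P ≤ P + Q := le_self_add
        _ ≤ I₁ + (P + Q) := le_add_self
    have hfinQ : Q ≠ ⊤ := by
      refine ne_top_of_le_ne_top hfinTot.ne ?_
      rw [hMtotal]
      calc Q ≤ P + Q := le_add_self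
        _ ≤ I₁ + (P + Q) := le_add_self
    -- energy of the rescaled competitor
    have hGcomp : ∀ lam : ℝ, ∀ hlam : 0 < lam,
        Gfun f s (Dv a lam hlam α') (fun t => β (Psi a lam hlam t)) (Dv a lam hlam β')
          = I₁ + (ENNReal.ofReal (1/lam) * P + ENNReal.ofReal lam * Q) := by
      intro lam hlam
      set K : ℝ≥0∞ := ENNReal.ofReal (1/lam^2) with hK
      set Hfun : ℝ → ℝ≥0∞ := fun u => K * (A u + C u) + B u with hH
      have hptu : ∀ u : ℝ, ENNReal.ofReal (s ^ 2 * (α' u / lam) ^ 2) * (f (β u)) ^ 2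
          + ENNReal.ofReal ((1 - β u) ^ 2 / 4 + (β' u / lam) ^ 2) = Hfun u := by
        intro u
        have h1 : s^2 * (α' u / lam)^2 = (1/lam^2) * (s^2 * (α' u)^2) := by
          field_simp
        have h2 : (β' u / lam)^2 = (1/lam^2) * (β' u)^2 := by
          field_simp
        rw [h1, h2, ENNReal.ofReal_add (by positivity) (by positivity),
          ENNReal.ofReal_mul (le_of_lt (by positivity : (0:ℝ) < 1/lam^2)),
          ENNReal.ofReal_mul (le_of_lt (by positivity : (0:ℝ) < 1/lam^2)),
          hH, hK, hA, hB, hC]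
        ring
      rw [Gfun, hsplit _ a]
      have e1 : ∫⁻ t in Iic a, (ENNReal.ofReal (s ^ 2 * (Dv a lam hlam α' t) ^ 2)
            * (f (β (Psi a lam hlam t))) ^ 2
          + ENNReal.ofReal ((1 - β (Psi a lam hlam t)) ^ 2 / 4 + (Dv a lam hlam β' t) ^ 2))
          = I₁ := by
        rw [hI₁]
        apply lintegral_congr_ae
        filter_upwards [ae_restrict_mem measurableSet_Iic] with t ht
        have h1 : Dv a lam hlam α' t = α' t := if_pos ht.out
        have h2 : Dv a lam hlam β' t = β' t := if_pos ht.out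
        have h3 : Psi a lam hlam t = t := if_pos ht.out
        rw [h1, h2, h3, hInteg t]
      have e2 : ∫⁻ t in Ioi a, (ENNReal.ofReal (s ^ 2 * (Dv a lam hlam α' t) ^ 2)
            * (f (β (Psi a lam hlam t))) ^ 2
          + ENNReal.ofReal ((1 - β (Psi a lam hlam t)) ^ 2 / 4 + (Dv a lam hlam β' t) ^ 2))
          = ∫⁻ t in Ioi a, Hfun (psiE a lam hlam t) := by
        apply lintegral_congr_ae
        filter_upwards [ae_restrict_mem measurableSet_Ioi] with t ht
        have hta : ¬ (t ≤ a) := not_le.mpr ht.out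
        have h1 : Dv a lam hlam α' t = α' (psiE a lam hlam t) / lam := if_neg hta
        have h2 : Dv a lam hlam β' t = β' (psiE a lam hlam t) / lam := if_neg hta
        have h3 : Psi a lam hlam t = psiE a lam hlam t := Psi_eq_psiE a lam hlam (le_of_lt ht.out)
        rw [h1, h2, h3, hptu (psiE a lam hlam t)]
      rw [e1, e2, lintegral_psiE a lam hlam Hfun]
      have e3 : ∫⁻ t in Ioi a, Hfun t = K * P + Q := by
        rw [hH]
        rw [lintegral_add_left' ((hACm.restrict).const_mul K) B,
          lintegral_const_mul' K _ (by rw [hK]; exact ENNReal.ofReal_ne_top), hP, hQ]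
      rw [e3, mul_add, ← mul_assoc, hK, ← ENNReal.ofReal_mul hlam.le,
        show lam * (1/lam^2) = 1/lam by field_simp]
    -- minimality
    have hle : ∀ lam : ℝ, 0 < lam →
        I₁ + (P + Q) ≤ I₁ + (ENNReal.ofReal (1/lam) * P + ENNReal.ofReal lam * Q) := by
      intro lam hlam
      rw [← hMtotal, ← hGcomp lam hlam, hmin]
      exact sInf_le ⟨_, _, _, _, memU1_rescale a lam hlam α α' β β' hUfull, rfl⟩
    have hle' : ∀ lam : ℝ, 0 < lam →
        P + Q ≤ ENNReal.ofReal (1/lam) * P + ENNReal.ofReal lam * Q := by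
      intro lam hlam
      exact (ENNReal.add_le_add_iff_left hfinI₁).mp (hle lam hlam)
    -- to real numbers
    have hreal : ∀ lam : ℝ, 0 < lam →
        P.toReal + Q.toReal ≤ (1/lam) * P.toReal + lam * Q.toReal := by
      intro lam hlam
      have hRHSne : ENNReal.ofReal (1/lam) * P + ENNReal.ofReal lam * Q ≠ ⊤ :=
        ENNReal.add_ne_top.mpr ⟨ENNReal.mul_ne_top ENNReal.ofReal_ne_top hfinP,
          ENNReal.mul_ne_top ENNReal.ofReal_ne_top hfinQ⟩
      have h1 := ENNReal.toReal_mono hRHSne (hle' lam hlam)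
      rw [ENNReal.toReal_add (ENNReal.mul_ne_top ENNReal.ofReal_ne_top hfinP)
          (ENNReal.mul_ne_top ENNReal.ofReal_ne_top hfinQ),
        ENNReal.toReal_mul, ENNReal.toReal_mul,
        ENNReal.toReal_ofReal (by positivity), ENNReal.toReal_ofReal hlam.le,
        ENNReal.toReal_add hfinP hfinQ] at h1
      exact h1
    have hPQ : P.toReal = Q.toReal :=
      pq_eq _ _ ENNReal.toReal_nonneg ENNReal.toReal_nonneg hreal
    exact (ENNReal.toReal_eq_toReal_iff' hfinP hfinQ).mp hPQ
  -- conclude a.e. equality from equality of integrals over all Ioi a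
  set D : ℝ → ℝ≥0∞ := hACm.mk _ with hD
  have hDm : Measurable D := hACm.measurable_mk
  have hDe : (fun t => A t + C t) =ᵐ[volume] D := hACm.ae_eq_mk
  have key' : ∀ a : ℝ, (∫⁻ t in Ioi a, D t) = ∫⁻ t in Ioi a, B t := by
    intro a
    rw [← key a]
    exact (lintegral_congr_ae (ae_restrict_of_ae hDe)).symm
  have hACfin : (∫⁻ t, (A t + C t)) < ⊤ := by
    refine lt_of_le_of_lt ?_ hfinTot
    rw [htotal]
    exact lintegral_mono fun t => add_le_add (le_refl (A t)) le_add_self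
  have hDfin : (∫⁻ t, D t) < ⊤ := by
    rwa [← lintegral_congr_ae hDe]
  have hBfin : (∫⁻ t, B t) < ⊤ := by
    refine lt_of_le_of_lt ?_ hfinTot
    rw [htotal]
    exact lintegral_mono fun t => le_trans le_self_add le_add_self
  set μ1 : Measure ℝ := volume.withDensity D with hμ1
  set μ2 : Measure ℝ := volume.withDensity B with hμ2
  have hμ1fin : IsFiniteMeasure μ1 := ⟨by rwa [hμ1, withDensity_apply _ MeasurableSet.univ,
    Measure.restrict_univ]⟩
  have hμ2fin : IsFiniteMeasure μ2 := ⟨by rwa [hμ2, withDensity_apply _ MeasurableSet.univ,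
    Measure.restrict_univ]⟩
  have hμIoi : ∀ a : ℝ, μ1 (Ioi a) = μ2 (Ioi a) := by
    intro a
    rw [hμ1, hμ2, withDensity_apply _ measurableSet_Ioi, withDensity_apply _ measurableSet_Ioi]
    exact key' a
  have hμuniv : μ1 univ = μ2 univ := by
    have hUn : (univ : Set ℝ) = ⋃ n : ℕ, Ioi (-(n:ℝ)) := by
      ext x
      simp only [mem_univ, mem_iUnion, mem_Ioi, true_iff]
      obtain ⟨n, hn⟩ := exists_nat_gt (-x)
      exact ⟨n, by linarith⟩
    have hmono : Monotone (fun n : ℕ => Ioi (-(n:ℝ))) := by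
      intro n m hnm
      exact Ioi_subset_Ioi (by exact_mod_cast neg_le_neg (by exact_mod_cast hnm))
    rw [hUn, hmono.directed_le.measure_iUnion,
      hmono.directed_le.measure_iUnion]
    exact iSup_congr fun n => hμIoi _
  have hμeq : μ1 = μ2 := by
    haveI := hμ1fin
    haveI := hμ2fin
    refine ext_of_generate_finite (range Ioi)
      (BorelSpace.measurable_eq.trans (borel_eq_generateFrom_Ioi ℝ)) isPiSystem_Ioi ?_ hμuniv
    rintro s ⟨a, rfl⟩
    exact hμIoi a
  have hDB : D =ᵐ[volume] B := by
    refine ae_eq_of_forall_setLIntegral_eq_of_sigmaFinite hDm hBm ?_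
    intro u hu _
    rw [← withDensity_apply _ hu, ← withDensity_apply _ hu, ← hμ1, ← hμ2, hμeq]
  have hfinal : (fun t => A t + C t) =ᵐ[volume] B := hDe.trans hDB
  filter_upwards [hfinal] with t ht
  exact ht
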